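/- arXiv:2203.06017 — 3 statements merged into one kernel-verified Lean document; each statement's English description precedes it below -/
import Mathlib

section
/- Let $B$ be a ring, $r \geq 1$ and $d \in \mathbb{Z}$. With $s_j$ and $J_{d,r} \subseteq B[p_1,\dots,p_r]$, $J_{d,r-1} \subseteq B[p_1,\dots,p_{r-1}]$ defined as usual, there is an exact sequence of $B$-bimodules $$B[p_1,\dots,p_r]/J_{d-1,r} \xrightarrow{\;p_r\cdot\;} B[p_1,\dots,p_r]/J_{d,r} \xrightarrow{\;p_r \mapsto 0\;} B[p_1,\dots,p_{r-1}]/J_{d,r-1} \to 0,$$ where the first map is induced by multiplication by $p_r$ and the second by the algebra map sending $p_r$ to $0$: i.e., the second map is surjective and its kernel equals the image of the first map. -/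
open scoped Pointwise

noncomputable section

/-- The (possibly noncommutative) polynomial ring `B[p₁,…,p_r]` over a ring `B`,
with `r` central variables, realized as the monoid algebra of `Fin r →₀ ℕ`. -/
abbrev NCPoly (B : Type*) [Ring B] (r : ℕ) := AddMonoidAlgebra B (Fin r →₀ ℕ)

/-- The variable `p_{i+1}` of `B[p₁,…,p_r]`. -/
noncomputable def pvar (B : Type*) [Ring B] (r : ℕ) (i : Fin r) : NCPoly B r :=
  AddMonoidAlgebra.single (Finsupp.single i 1) (1 : B)

/-- The two-sided ideal `J_d` generated by the `s j` with `j ≥ d`. -/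
noncomputable def Jideal (B : Type*) [Ring B] (r : ℕ) (s : ℤ → NCPoly B r) (d : ℤ) :
    TwoSidedIdeal (NCPoly B r) :=
  TwoSidedIdeal.span {x | ∃ j : ℤ, d ≤ j ∧ x = s j}

namespace NCAux

variable {B : Type*} [Ring B] {r m : ℕ}

lemma singleone_comm (σ : Fin r →₀ ℕ) (a : NCPoly B r) :
    AddMonoidAlgebra.single σ (1 : B) * a = a * AddMonoidAlgebra.single σ 1 := by
  induction a using AddMonoidAlgebra.induction with
  | zero => simp
  | single_add τ b f _ _ ih =>
      rw [mul_add, add_mul, ih]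
      congr 1
      show AddMonoidAlgebra.single σ (1:B) * AddMonoidAlgebra.single τ b
        = AddMonoidAlgebra.single τ b * AddMonoidAlgebra.single σ 1
      rw [AddMonoidAlgebra.single_mul_single, AddMonoidAlgebra.single_mul_single,
        add_comm, one_mul, mul_one]

lemma pvar_comm (i : Fin r) (a : NCPoly B r) : pvar B r i * a = a * pvar B r i :=
  singleone_comm _ a

lemma pvar_pow (i : Fin r) (k : ℕ) :
    pvar B r i ^ k = AddMonoidAlgebra.single (Finsupp.single i k) (1 : B) := by
  rw [pvar, AddMonoidAlgebra.single_pow, one_pow, Finsupp.smul_single, smul_eq_mul, mul_one]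

variable (B m) in
def emb : NCPoly B m →+* NCPoly B (m + 1) :=
  AddMonoidAlgebra.mapDomainRingHom B
    (Finsupp.mapDomain.addMonoidHom (Fin.castSucc : Fin m → Fin (m + 1)))

lemma emb_single (n : Fin m →₀ ℕ) (b : B) :
    emb B m (AddMonoidAlgebra.single n b)
      = AddMonoidAlgebra.single (Finsupp.mapDomain Fin.castSucc n) b := by
  simp [emb, AddMonoidAlgebra.mapDomainRingHom_apply, AddMonoidAlgebra.mapDomain_single]

lemma emb_C (b : B) : emb B m (AddMonoidAlgebra.single 0 b) = AddMonoidAlgebra.single 0 b := by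
  rw [emb_single, Finsupp.mapDomain_zero]

lemma emb_pvar (i : Fin m) : emb B m (pvar B m i) = pvar B (m + 1) i.castSucc := by
  rw [pvar, emb_single, Finsupp.mapDomain_single, pvar]

section S

variable (s : ℤ → NCPoly B (m+1)) (s' : ℤ → NCPoly B m)

lemma g_s (hs0 : s 0 = 1) (hsneg : ∀ j : ℤ, j < 0 → s j = 0)
    (hsrec : ∀ j : ℤ, 0 < j → s j = -∑ i : Fin (m+1), pvar B (m+1) i * s (j - ((i : ℕ) + 1)))
    (hs'0 : s' 0 = 1) (hs'neg : ∀ j : ℤ, j < 0 → s' j = 0)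
    (hs'rec : ∀ j : ℤ, 0 < j → s' j = -∑ i : Fin m, pvar B m i * s' (j - ((i : ℕ) + 1)))
    (g : NCPoly B (m+1) →+* NCPoly B m)
    (hgvar : ∀ i : Fin m, g (pvar B (m+1) i.castSucc) = pvar B m i)
    (hglast : g (pvar B (m+1) (Fin.last m)) = 0) :
    ∀ j : ℤ, g (s j) = s' j := by
  have key : ∀ N : ℕ, ∀ j : ℤ, j ≤ N → g (s j) = s' j := by
    intro N
    induction N with
    | zero =>
      intro j hj
      rcases lt_or_ge j 0 with h | h
      · rw [hsneg j h, hs'neg j h, map_zero]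
      · have : j = 0 := by omega
        subst this
        rw [hs0, hs'0, map_one]
    | succ N ih =>
      intro j hj
      by_cases hle : j ≤ (N : ℤ)
      · exact ih j hle
      rcases lt_or_ge j 0 with h | h
      · rw [hsneg j h, hs'neg j h, map_zero]
      have hpos : 0 < j := by omega
      rw [hsrec j hpos, hs'rec j hpos, map_neg, map_sum, Fin.sum_univ_castSucc]
      have hlast0 : g (pvar B (m+1) (Fin.last m) * s (j - ((Fin.last m : ℕ) + 1))) = 0 := by
        rw [map_mul, hglast, zero_mul]
      rw [hlast0, add_zero]
      congr 1
      refine Finset.sum_congr rfl fun i _ => ?_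
      rw [map_mul, hgvar i, Fin.coe_castSucc, ih _ (by omega)]
  exact fun j => by
    rcases lt_or_ge j 0 with h | h
    · rw [hsneg j h, hs'neg j h, map_zero]
    · exact key j.toNat j (by omega)

lemma emb_s' (hs0 : s 0 = 1) (hsneg : ∀ j : ℤ, j < 0 → s j = 0)
    (hsrec : ∀ j : ℤ, 0 < j → s j = -∑ i : Fin (m+1), pvar B (m+1) i * s (j - ((i : ℕ) + 1)))
    (hs'0 : s' 0 = 1) (hs'neg : ∀ j : ℤ, j < 0 → s' j = 0)
    (hs'rec : ∀ j : ℤ, 0 < j → s' j = -∑ i : Fin m, pvar B m i * s' (j - ((i : ℕ) + 1))) :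
    ∀ j : ℤ, ∃ t, emb B m (s' j) = s j + pvar B (m+1) (Fin.last m) * t := by
  have key : ∀ N : ℕ, ∀ j : ℤ, j ≤ N →
      ∃ t, emb B m (s' j) = s j + pvar B (m+1) (Fin.last m) * t := by
    intro N
    induction N with
    | zero =>
      intro j hj
      rcases lt_or_ge j 0 with h | h
      · exact ⟨0, by rw [hsneg j h, hs'neg j h, map_zero]; simp⟩
      · have : j = 0 := by omega
        subst this
        exact ⟨0, by rw [hs0, hs'0, map_one]; simp⟩
    | succ N ih =>
      intro j hj
      by_cases hle : j ≤ (N : ℤ)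
      · exact ih j hle
      rcases lt_or_ge j 0 with h | h
      · exact ⟨0, by rw [hsneg j h, hs'neg j h, map_zero]; simp⟩
      have hpos : 0 < j := by omega
      choose t ht using fun i : Fin m => ih (j - ((i : ℕ) + 1)) (by omega)
      refine ⟨s (j - ((m : ℕ) + 1)) - ∑ i : Fin m, pvar B (m+1) i.castSucc * t i, ?_⟩
      have hterm : ∀ i : Fin m, emb B m (pvar B m i * s' (j - ((i : ℕ) + 1)))
          = pvar B (m+1) i.castSucc * s (j - ((i : ℕ) + 1))
            + pvar B (m+1) (Fin.last m) * (pvar B (m+1) i.castSucc * t i) := by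
        intro i
        rw [map_mul, emb_pvar, ht i, mul_add]
        congr 1
        rw [← mul_assoc, ← pvar_comm (Fin.last m) (pvar B (m+1) i.castSucc), mul_assoc]
      have hs'exp : emb B m (s' j)
          = -(∑ i : Fin m, pvar B (m+1) i.castSucc * s (j - ((i : ℕ) + 1)))
            - pvar B (m+1) (Fin.last m) * ∑ i : Fin m, pvar B (m+1) i.castSucc * t i := by
        rw [hs'rec j hpos, map_neg, map_sum]
        rw [Finset.sum_congr rfl fun i _ => hterm i, Finset.sum_add_distrib, ← Finset.mul_sum]
        abel
      have hsexp : s j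
          = -(∑ i : Fin m, pvar B (m+1) i.castSucc * s (j - ((i : ℕ) + 1)))
            - pvar B (m+1) (Fin.last m) * s (j - ((m : ℕ) + 1)) := by
        rw [hsrec j hpos, Fin.sum_univ_castSucc]
        simp only [Fin.coe_castSucc, Fin.val_last]
        abel
      rw [hs'exp, hsexp, mul_sub]
      abel
  exact fun j => by
    rcases lt_or_ge j 0 with h | h
    · exact ⟨0, by rw [hsneg j h, hs'neg j h, map_zero]; simp⟩
    · exact key j.toNat j (by omega)

end S

lemma decomp_single (n : Fin (m+1) →₀ ℕ) (b : B) :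
    ∃ w y, AddMonoidAlgebra.single n b
      = emb B m w + pvar B (m+1) (Fin.last m) * y := by
  induction n using Finsupp.induction with
  | zero => exact ⟨AddMonoidAlgebra.single 0 b, 0, by rw [emb_C]; simp⟩
  | single_add i k f hif hk ih =>
    obtain ⟨w, y, hwy⟩ := ih
    have hsplit : (AddMonoidAlgebra.single (Finsupp.single i k + f) b : NCPoly B (m+1))
        = AddMonoidAlgebra.single (Finsupp.single i k) (1:B) * AddMonoidAlgebra.single f b := by
      rw [AddMonoidAlgebra.single_mul_single, one_mul]
    by_cases him : (i : ℕ) < m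
    · set i' : Fin m := ⟨(i : ℕ), him⟩ with hi'
      have hi : i = i'.castSucc := by ext; simp [hi']
      refine ⟨pvar B m i' ^ k * w, pvar B (m+1) i ^ k * y, ?_⟩
      rw [hsplit, ← pvar_pow, hwy, mul_add, map_mul, map_pow, emb_pvar, ← hi]
      congr 1
      rw [← mul_assoc, ← pvar_comm (Fin.last m) (pvar B (m+1) i ^ k), mul_assoc]
    · have hi : i = Fin.last m := by
        ext
        have := i.isLt
        simp only [Fin.val_last]
        omega
      subst hi
      refine ⟨0, AddMonoidAlgebra.single (Finsupp.single (Fin.last m) (k-1) + f) b, ?_⟩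
      rw [map_zero, zero_add, pvar, AddMonoidAlgebra.single_mul_single, one_mul, ← add_assoc,
        ← Finsupp.single_add]
      have hk1 : 1 + (k - 1) = k := by omega
      rw [hk1]

lemma decomp (z : NCPoly B (m+1)) :
    ∃ w y, z = emb B m w + pvar B (m+1) (Fin.last m) * y := by
  induction z using AddMonoidAlgebra.induction with
  | zero => exact ⟨0, 0, by simp⟩
  | single_add n b f _ _ ih =>
    obtain ⟨w, y, hwy⟩ := ih
    obtain ⟨w', y', h'⟩ := decomp_single n b
    refine ⟨w' + w, y' + y, ?_⟩
    rw [h', hwy, map_add, mul_add]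
    abel

lemma g_emb_id (g : NCPoly B (m+1) →+* NCPoly B m)
    (hgC : ∀ b : B, g (AddMonoidAlgebra.single 0 b) = AddMonoidAlgebra.single 0 b)
    (hgvar : ∀ i : Fin m, g (pvar B (m+1) i.castSucc) = pvar B m i) :
    ∀ y, g (emb B m y) = y := by
  have hone : ∀ n : Fin m →₀ ℕ,
      g (emb B m (AddMonoidAlgebra.single n (1:B))) = AddMonoidAlgebra.single n 1 := by
    intro n
    induction n using Finsupp.induction with
    | zero => rw [← AddMonoidAlgebra.one_def, map_one, map_one]
    | single_add i k f hif hk ih =>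
      have hsplit : (AddMonoidAlgebra.single (Finsupp.single i k + f) (1:B) : NCPoly B m)
          = AddMonoidAlgebra.single (Finsupp.single i k) (1:B)
            * AddMonoidAlgebra.single f (1:B) := by
        rw [AddMonoidAlgebra.single_mul_single, one_mul]
      rw [hsplit, ← pvar_pow, map_mul, map_mul, map_pow, map_pow, emb_pvar, hgvar i, ih,
        pvar_pow]
  intro y
  induction y using AddMonoidAlgebra.induction with
  | zero => rw [map_zero, map_zero]
  | single_add n b f _ _ ih =>
    have hsplit : (AddMonoidAlgebra.single n b : NCPoly B m)
        = AddMonoidAlgebra.single 0 b * AddMonoidAlgebra.single n (1:B) := by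
      rw [AddMonoidAlgebra.single_mul_single, zero_add, mul_one]
    rw [map_add, map_add, ih, hsplit, map_mul, map_mul, emb_C, hgC, hone]


end NCAux


namespace NCAux

lemma span_ind {R : Type*} [Ring R] {S : Set R} {x : R}
    (hx : x ∈ TwoSidedIdeal.span S) (T : Set R)
    (h0 : (0:R) ∈ T)
    (hadd : ∀ a b : R, a ∈ T → b ∈ T → a + b ∈ T)
    (hneg : ∀ a : R, a ∈ T → -a ∈ T)
    (hml : ∀ a b : R, b ∈ T → a * b ∈ T)
    (hmr : ∀ a b : R, a ∈ T → a * b ∈ T)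
    (hgen : ∀ a ∈ S, a ∈ T) : x ∈ T := by
  have := TwoSidedIdeal.mem_span_iff.mp hx
    (TwoSidedIdeal.mk' T h0 (fun {a b} => hadd a b) (fun {a} => hneg a)
      (fun {a b} => hml a b) (fun {a b} => hmr a b))
    (fun a ha => by rw [SetLike.mem_coe, TwoSidedIdeal.mem_mk']; exact hgen a ha)
  rwa [TwoSidedIdeal.mem_mk'] at this

variable {B : Type*} [Ring B] {r m : ℕ}

lemma s_mem (s : ℤ → NCPoly B r) (d j : ℤ) (hj : d ≤ j) : s j ∈ Jideal B r s d :=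
  TwoSidedIdeal.subset_span ⟨j, hj, rfl⟩

lemma pr_s_mem (s : ℤ → NCPoly B (m+1))
    (hsneg : ∀ j : ℤ, j < 0 → s j = 0)
    (hsrec : ∀ j : ℤ, 0 < j → s j = -∑ i : Fin (m+1), pvar B (m+1) i * s (j - ((i : ℕ) + 1)))
    (d j : ℤ) (hj : d - 1 ≤ j) :
    pvar B (m+1) (Fin.last m) * s j ∈ Jideal B (m+1) s d := by
  rcases lt_or_ge j 0 with h | h
  · rw [hsneg j h, mul_zero]; exact TwoSidedIdeal.zero_mem _
  have hrec := hsrec (j + ((m : ℤ) + 1)) (by omega)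
  rw [Fin.sum_univ_castSucc] at hrec
  simp only [Fin.coe_castSucc, Fin.val_last] at hrec
  have hidx : j + ((m : ℤ) + 1) - ((m : ℤ) + 1) = j := by ring
  rw [hidx] at hrec
  have key : pvar B (m+1) (Fin.last m) * s j
      = -s (j + ((m : ℤ) + 1))
        - ∑ i : Fin m, pvar B (m+1) i.castSucc * s (j + ((m : ℤ) + 1) - ((i : ℕ) + 1)) := by
    rw [hrec]; abel
  rw [key]
  refine TwoSidedIdeal.sub_mem _ (TwoSidedIdeal.neg_mem _ (s_mem s d _ (by omega)))
    (TwoSidedIdeal.finsetSum_mem _ _ _ fun i _ =>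
      TwoSidedIdeal.mul_mem_left _ _ _ (s_mem s d _ (by have := i.isLt; omega)))

end NCAux
/-- Exactness of
`B[p₁,…,p_r]/J_{d-1,r} --(p_r⬝)--> B[p₁,…,p_r]/J_{d,r} --(p_r ↦ 0)--> B[p₁,…,p_{r-1}]/J_{d,r-1} → 0`,
stated elementwise: both maps are well defined, the second induced map is surjective, and its
kernel equals the image of the first. Here `g` is the `B`-algebra homomorphism with `p_r ↦ 0`,
`p_i ↦ p_i` for `i < r`. -/
theorem statement4 (B : Type*) [Ring B] (r : ℕ) (hr : 1 ≤ r)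
    (s : ℤ → NCPoly B r) (hs0 : s 0 = 1) (hsneg : ∀ j : ℤ, j < 0 → s j = 0)
    (hsrec : ∀ j : ℤ, 0 < j → s j = -∑ i : Fin r, pvar B r i * s (j - ((i : ℕ) + 1)))
    (s' : ℤ → NCPoly B (r - 1)) (hs'0 : s' 0 = 1) (hs'neg : ∀ j : ℤ, j < 0 → s' j = 0)
    (hs'rec : ∀ j : ℤ, 0 < j →
      s' j = -∑ i : Fin (r - 1), pvar B (r - 1) i * s' (j - ((i : ℕ) + 1)))
    (g : NCPoly B r →+* NCPoly B (r - 1))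
    (hgC : ∀ b : B, g (AddMonoidAlgebra.single 0 b) = AddMonoidAlgebra.single 0 b)
    (hgvar : ∀ (i : Fin r) (h : (i : ℕ) < r - 1), g (pvar B r i) = pvar B (r - 1) ⟨i, h⟩)
    (hglast : g (pvar B r ⟨r - 1, by omega⟩) = 0)
    (d : ℤ) :
    (∀ x ∈ Jideal B r s (d - 1), pvar B r ⟨r - 1, by omega⟩ * x ∈ Jideal B r s d) ∧
    (∀ x ∈ Jideal B r s d, g x ∈ Jideal B (r - 1) s' d) ∧
    (∀ y : NCPoly B (r - 1), ∃ x : NCPoly B r, g x - y ∈ Jideal B (r - 1) s' d) ∧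
    (∀ x : NCPoly B r, g x ∈ Jideal B (r - 1) s' d ↔
      ∃ y : NCPoly B r, x - pvar B r ⟨r - 1, by omega⟩ * y ∈ Jideal B r s d) := by
  obtain ⟨m, rfl⟩ : ∃ m, r = m + 1 := ⟨r - 1, by omega⟩
  have hgvar' : ∀ i : Fin m, g (pvar B (m+1) i.castSucc) = pvar B m i :=
    fun i => hgvar i.castSucc i.isLt
  have hglast' : g (pvar B (m+1) (Fin.last m)) = 0 := hglast
  have hgs : ∀ j : ℤ, g (s j) = s' j :=
    NCAux.g_s s s' hs0 hsneg hsrec hs'0 hs'neg hs'rec g hgvar' hglast'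
  have hembs : ∀ j : ℤ, ∃ t, NCAux.emb B m (s' j) = s j + pvar B (m+1) (Fin.last m) * t :=
    NCAux.emb_s' s s' hs0 hsneg hsrec hs'0 hs'neg hs'rec
  have hge : ∀ y, g (NCAux.emb B m y) = y := NCAux.g_emb_id g hgC hgvar'
  have part2 : ∀ x ∈ Jideal B (m+1) s d, g x ∈ Jideal B m s' d := by
    intro x hx
    refine NCAux.span_ind hx {x | g x ∈ Jideal B m s' d} ?_ ?_ ?_ ?_ ?_ ?_
    · simp only [Set.mem_setOf_eq, map_zero]
      exact TwoSidedIdeal.zero_mem _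
    · intro a b ha hb
      simp only [Set.mem_setOf_eq] at *
      rw [map_add]; exact TwoSidedIdeal.add_mem _ ha hb
    · intro a ha
      simp only [Set.mem_setOf_eq] at *
      rw [map_neg]; exact TwoSidedIdeal.neg_mem _ ha
    · intro a b hb
      simp only [Set.mem_setOf_eq] at *
      rw [map_mul]; exact TwoSidedIdeal.mul_mem_left _ _ _ hb
    · intro a b ha
      simp only [Set.mem_setOf_eq] at *
      rw [map_mul]; exact TwoSidedIdeal.mul_mem_right _ _ _ ha
    · rintro a ⟨j, hj, rfl⟩
      simp only [Set.mem_setOf_eq] at *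
      rw [hgs j]; exact NCAux.s_mem s' d j hj
  refine ⟨?_, part2, ?_, ?_⟩
  · -- part 1
    intro x hx
    show pvar B (m+1) (Fin.last m) * x ∈ Jideal B (m+1) s d
    refine NCAux.span_ind hx {x | pvar B (m+1) (Fin.last m) * x ∈ Jideal B (m+1) s d}
      ?_ ?_ ?_ ?_ ?_ ?_
    · simp only [Set.mem_setOf_eq, mul_zero]
      exact TwoSidedIdeal.zero_mem _
    · intro a b ha hb
      simp only [Set.mem_setOf_eq] at *
      rw [mul_add]; exact TwoSidedIdeal.add_mem _ ha hb
    · intro a ha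
      simp only [Set.mem_setOf_eq] at *
      rw [mul_neg]; exact TwoSidedIdeal.neg_mem _ ha
    · intro a b hb
      simp only [Set.mem_setOf_eq] at *
      rw [← mul_assoc, NCAux.pvar_comm, mul_assoc]
      exact TwoSidedIdeal.mul_mem_left _ _ _ hb
    · intro a b ha
      simp only [Set.mem_setOf_eq] at *
      rw [← mul_assoc]
      exact TwoSidedIdeal.mul_mem_right _ _ _ ha
    · rintro a ⟨j, hj, rfl⟩
      exact NCAux.pr_s_mem s hsneg hsrec d j (by omega)
  · -- part 3
    intro y
    exact ⟨NCAux.emb B m y, by rw [hge y, sub_self]; exact TwoSidedIdeal.zero_mem _⟩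
  · -- part 4
    intro x
    constructor
    · intro hx
      obtain ⟨w, y₁, hxd⟩ := NCAux.decomp x
      have hw : g x = w := by
        rw [hxd, map_add, hge, map_mul, hglast', zero_mul, add_zero]
      have hwJ : w ∈ Jideal B m s' d := by rw [← hw]; exact hx
      obtain ⟨t, ht⟩ : ∃ t, NCAux.emb B m w - pvar B (m+1) (Fin.last m) * t
          ∈ Jideal B (m+1) s d := by
        refine NCAux.span_ind hwJ
          {v | ∃ t, NCAux.emb B m v - pvar B (m+1) (Fin.last m) * t ∈ Jideal B (m+1) s d}
          ?_ ?_ ?_ ?_ ?_ ?_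
        · exact ⟨0, by rw [map_zero, mul_zero, sub_zero]; exact TwoSidedIdeal.zero_mem _⟩
        · rintro a b ⟨t1, h1⟩ ⟨t2, h2⟩
          refine ⟨t1 + t2, ?_⟩
          have heq : NCAux.emb B m (a + b) - pvar B (m+1) (Fin.last m) * (t1 + t2)
              = (NCAux.emb B m a - pvar B (m+1) (Fin.last m) * t1)
                + (NCAux.emb B m b - pvar B (m+1) (Fin.last m) * t2) := by
            rw [map_add, mul_add]; abel
          rw [heq]; exact TwoSidedIdeal.add_mem _ h1 h2
        · rintro a ⟨t1, h1⟩
          refine ⟨-t1, ?_⟩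
          have heq : NCAux.emb B m (-a) - pvar B (m+1) (Fin.last m) * (-t1)
              = -(NCAux.emb B m a - pvar B (m+1) (Fin.last m) * t1) := by
            rw [map_neg, mul_neg]; abel
          rw [heq]; exact TwoSidedIdeal.neg_mem _ h1
        · rintro a b ⟨t1, h1⟩
          refine ⟨NCAux.emb B m a * t1, ?_⟩
          have heq : NCAux.emb B m (a * b)
                - pvar B (m+1) (Fin.last m) * (NCAux.emb B m a * t1)
              = NCAux.emb B m a
                * (NCAux.emb B m b - pvar B (m+1) (Fin.last m) * t1) := by
            rw [map_mul, mul_sub]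
            congr 1
            rw [← mul_assoc, NCAux.pvar_comm, mul_assoc]
          rw [heq]; exact TwoSidedIdeal.mul_mem_left _ _ _ h1
        · rintro a b ⟨t1, h1⟩
          refine ⟨t1 * NCAux.emb B m b, ?_⟩
          have heq : NCAux.emb B m (a * b)
                - pvar B (m+1) (Fin.last m) * (t1 * NCAux.emb B m b)
              = (NCAux.emb B m a - pvar B (m+1) (Fin.last m) * t1) * NCAux.emb B m b := by
            rw [map_mul, sub_mul, mul_assoc]
          rw [heq]; exact TwoSidedIdeal.mul_mem_right _ _ _ h1
        · rintro a ⟨j, hj, rfl⟩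
          obtain ⟨t, ht⟩ := hembs j
          refine ⟨t, ?_⟩
          rw [ht, add_sub_cancel_right]
          exact NCAux.s_mem s d j hj
      refine ⟨y₁ + t, ?_⟩
      show x - pvar B (m+1) (Fin.last m) * (y₁ + t) ∈ _
      have heq : x - pvar B (m+1) (Fin.last m) * (y₁ + t)
          = NCAux.emb B m w - pvar B (m+1) (Fin.last m) * t := by
        rw [hxd, mul_add]; abel
      rw [heq]; exact ht
    · rintro ⟨y, hy⟩
      have hy' : x - pvar B (m+1) (Fin.last m) * y ∈ Jideal B (m+1) s d := hy
      have hgx : g x = g (x - pvar B (m+1) (Fin.last m) * y) := by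
        rw [map_sub, map_mul, hglast', zero_mul, sub_zero]
      show g x ∈ Jideal B m s' d
      rw [hgx]
      exact part2 _ hy'
end
end

section
/- Let $B$ be a ring and $r \in \mathbb{N}$, with $L, J_n \subseteq B[p_1,\dots,p_r]$ as usual ($L$ generated by $p_1,\dots,p_r$; $J_n$ generated by $s_j$ for $j \geq n$, where $s_0=1$, $s_j=0$ for $j<0$, $s_j=-\sum_{i=1}^r p_i s_{j-i}$ for $j>0$). Then for each $n \in \mathbb{Z}$ there exists $k \in \mathbb{N}$ such that $L^k \subseteq J_n$. -/
open scoped Pointwise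

noncomputable section

/-- The two-sided ideal `L` generated by the variables `p₁,…,p_r`. -/
noncomputable def Lideal (B : Type*) [Ring B] (r : ℕ) : TwoSidedIdeal (NCPoly B r) :=
  TwoSidedIdeal.span (Set.range (pvar B r))

/-- Product of two two-sided ideals: the two-sided ideal generated by products. -/
noncomputable def imul {R : Type*} [Ring R] (I J : TwoSidedIdeal R) : TwoSidedIdeal R :=
  TwoSidedIdeal.span ((I : Set R) * (J : Set R))

/-- Powers of a two-sided ideal (`I ^ 0` is the unit ideal). -/
noncomputable def ipow {R : Type*} [Ring R] (I : TwoSidedIdeal R) : ℕ → TwoSidedIdeal R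
  | 0 => ⊤
  | n + 1 => imul (ipow I n) I

/-! ### Auxiliary commutative theory over `ℤ` -/

/-- The commutative polynomial ring `ℤ[x₁,…,x_r]`. -/
abbrev PolyA (r : ℕ) := MvPolynomial (Fin r) ℤ

/-- The universal `s`-polynomials over `ℤ`. -/
noncomputable def sig (r : ℕ) : ℕ → PolyA r
  | 0 => 1
  | (j+1) => -∑ i : Fin r, if ((i : ℕ) + 1 ≤ j + 1) then MvPolynomial.X i * sig r (j - (i : ℕ)) else 0
  termination_by j => j
  decreasing_by simp_wf

lemma sig_succ (r j : ℕ) :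
    sig r (j+1) = -∑ i : Fin r,
      if ((i : ℕ) + 1 ≤ j + 1) then MvPolynomial.X i * sig r ((j+1) - ((i : ℕ)+1)) else 0 := by
  rw [sig.eq_2]
  simp [Nat.succ_sub_succ]

/-- The commutative analogue of `J_n` (for `n = n' ≥ 1` a natural number). -/
def Iid (r n' : ℕ) : Ideal (PolyA r) := Ideal.span {x | ∃ j : ℕ, n' ≤ j ∧ x = sig r j}

/-- The commutative analogue of `L`. -/
def Mid (r : ℕ) : Ideal (PolyA r) := Ideal.span (Set.range MvPolynomial.X)

lemma comm_main (r n' : ℕ) (hn : 1 ≤ n') : ∃ k, Mid r ^ k ≤ Iid r n' := by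
  classical
  set A := PolyA r
  set I := Iid r n' with hI
  -- the polynomials
  set F : Polynomial A := ∑ j ∈ Finset.range n', Polynomial.monomial j (sig r j) with hF
  set G : Polynomial A := 1 + ∑ i : Fin r,
      Polynomial.C (MvPolynomial.X i) * Polynomial.X ^ ((i : ℕ) + 1) with hG
  have hFcoeff : ∀ d, F.coeff d = if d < n' then sig r d else 0 := by
    intro d
    rw [hF, Polynomial.finset_sum_coeff]
    simp only [Polynomial.coeff_monomial]
    rw [Finset.sum_ite_eq' (Finset.range n') d (fun j => sig r j)]
    simp [Finset.mem_range]
  have hGFcoeff : ∀ d, (G * F).coeff d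
      = F.coeff d + ∑ i : Fin r, MvPolynomial.X i *
          (if (i : ℕ) + 1 ≤ d then F.coeff (d - ((i : ℕ) + 1)) else 0) := by
    intro d
    rw [hG, add_mul, one_mul, Finset.sum_mul, Polynomial.coeff_add]
    congr 1
    rw [Polynomial.finset_sum_coeff]
    exact Finset.sum_congr rfl fun (i : Fin r) _ => by
      rw [show Polynomial.C (MvPolynomial.X i) * Polynomial.X ^ ((i : ℕ) + 1) * F
          = Polynomial.C (MvPolynomial.X i) * (F * Polynomial.X ^ ((i : ℕ) + 1)) by ring,
        Polynomial.coeff_C_mul, Polynomial.coeff_mul_X_pow']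
  have hgen : ∀ j : ℕ, n' ≤ j → sig r j ∈ I := fun j hj =>
    Ideal.subset_span ⟨j, hj, rfl⟩
  have hkey : ∀ d, (G * F).coeff d - (1 : Polynomial A).coeff d ∈ I := by
    intro d
    rw [hGFcoeff d]
    match d with
    | 0 =>
      have h0 : 0 < n' := hn
      simp [hFcoeff, h0, sig, sig.eq_1]
    | (e+1) =>
      simp only [Polynomial.coeff_one]
      rw [if_neg (by omega), sub_zero]
      have hsplit : ∀ i : Fin r,
          MvPolynomial.X i * (if (i : ℕ) + 1 ≤ e + 1 then F.coeff ((e+1) - ((i : ℕ) + 1)) else 0)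
          = (if (i : ℕ) + 1 ≤ e + 1 then MvPolynomial.X i * sig r ((e+1) - ((i : ℕ)+1)) else 0)
            - (if ((i : ℕ) + 1 ≤ e + 1 ∧ n' ≤ (e+1) - ((i : ℕ)+1)) then
                MvPolynomial.X i * sig r ((e+1) - ((i : ℕ)+1)) else 0) := by
        intro i
        by_cases h1 : (i : ℕ) + 1 ≤ e + 1
        · rw [if_pos h1, if_pos h1, hFcoeff]
          by_cases h2 : n' ≤ (e+1) - ((i : ℕ) + 1)
          · rw [if_neg (by omega), if_pos ⟨h1, h2⟩, mul_zero]
            ring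
          · rw [if_pos (by omega), if_neg (by rintro ⟨-, hx⟩; exact h2 hx)]
            ring
        · rw [if_neg h1, if_neg h1, if_neg (by rintro ⟨hx, -⟩; exact h1 hx), mul_zero]
          ring
      rw [Finset.sum_congr rfl (fun i _ => hsplit i), Finset.sum_sub_distrib,
        show (∑ i : Fin r, if (i : ℕ) + 1 ≤ e + 1 then
            MvPolynomial.X i * sig r ((e+1) - ((i : ℕ)+1)) else 0) = - sig r (e+1) by
          rw [sig_succ]; ring]
      rw [hFcoeff]
      by_cases hd : e + 1 < n'
      · rw [if_pos hd]
        have hz : (∑ i : Fin r, if ((i : ℕ) + 1 ≤ e + 1 ∧ n' ≤ (e+1) - ((i : ℕ)+1)) then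
            MvPolynomial.X i * sig r ((e+1) - ((i : ℕ)+1)) else 0) = 0 :=
          Finset.sum_eq_zero fun i _ => by
            rw [if_neg]; rintro ⟨h1, h2⟩; omega
        rw [hz]
        have heq : sig r (e+1) + (-sig r (e+1) - 0) = 0 := by ring
        rw [heq]
        exact I.zero_mem
      · rw [if_neg hd]
        have h1 : sig r (e+1) ∈ I := hgen _ (by omega)
        have h2 : (∑ i : Fin r, if ((i : ℕ) + 1 ≤ e + 1 ∧ n' ≤ (e+1) - ((i : ℕ)+1)) then
            MvPolynomial.X i * sig r ((e+1) - ((i : ℕ)+1)) else 0) ∈ I :=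
          Ideal.sum_mem _ fun i _ => by
            split_ifs with h
            · exact Ideal.mul_mem_left _ _ (hgen _ h.2)
            · exact I.zero_mem
        have := I.sub_mem (I.neg_mem h1) h2
        convert this using 1
        ring
  -- pass to the quotient
  set q := Ideal.Quotient.mk I with hq
  have hGF1 : (G.map q) * (F.map q) = 1 := by
    rw [← Polynomial.map_mul, ← Polynomial.map_one q]
    ext d
    rw [Polynomial.coeff_map, Polynomial.coeff_map, Ideal.Quotient.mk_eq_mk_iff_sub_mem]
    exact hkey d
  have hunit : IsUnit (G.map q) := IsUnit.of_mul_eq_one _ hGF1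
  have hnil : ∀ i : Fin r, IsNilpotent (q (MvPolynomial.X i)) := by
    intro i
    have hc : (G.map q).coeff ((i : ℕ) + 1) = q (MvPolynomial.X i) := by
      rw [Polynomial.coeff_map, hG]
      congr 1
      rw [Polynomial.coeff_add, Polynomial.finset_sum_coeff]
      simp only [Polynomial.coeff_one, Polynomial.coeff_C_mul, Polynomial.coeff_X_pow,
        mul_ite, mul_one, mul_zero]
      rw [if_neg (by omega), zero_add]
      rw [show (∑ x : Fin r, if (i : ℕ) + 1 = (x : ℕ) + 1 then MvPolynomial.X x else 0)
          = ∑ x : Fin r, if x = i then MvPolynomial.X x else 0 from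
        Finset.sum_congr rfl fun x _ => by
          by_cases hx : x = i
          · subst hx; simp
          · rw [if_neg (fun h => hx (Fin.ext (by omega))), if_neg hx]]
      rw [Finset.sum_ite_eq' Finset.univ i MvPolynomial.X]
      simp
    have := (Polynomial.isUnit_iff_coeff_isUnit_isNilpotent.mp hunit).2 ((i : ℕ) + 1)
      (Nat.succ_ne_zero _)
    rwa [hc] at this
  have hrad : Mid r ≤ I.radical := by
    rw [Mid, Ideal.span_le]
    rintro _ ⟨i, rfl⟩
    obtain ⟨m, hm⟩ := hnil i
    rw [← map_pow, hq, Ideal.Quotient.eq_zero_iff_mem] at hm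
    exact ⟨m, hm⟩
  exact Ideal.exists_pow_le_of_le_radical_of_fg hrad (Submodule.fg_span (Set.finite_range _))

/-! ### Transfer to the noncommutative side -/

/-- The canonical map `ℤ[x₁,…,x_r] → B[p₁,…,p_r]`. -/
noncomputable def phi (B : Type*) [Ring B] (r : ℕ) : PolyA r →ₐ[ℤ] NCPoly B r :=
  AddMonoidAlgebra.lift ℤ (NCPoly B r) (Fin r →₀ ℕ) (AddMonoidAlgebra.of B (Fin r →₀ ℕ))

lemma phi_X (B : Type*) [Ring B] (r : ℕ) (i : Fin r) :
    phi B r (MvPolynomial.X i) = pvar B r i := by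
  refine Eq.trans (AddMonoidAlgebra.lift_single (R := ℤ) (M := Fin r →₀ ℕ)
    (A := NCPoly B r) (AddMonoidAlgebra.of B (Fin r →₀ ℕ))
    (Finsupp.single i 1) (1 : ℤ)) ?_
  simp [pvar, AddMonoidAlgebra.of_apply]

lemma pvar_comm (B : Type*) [Ring B] (r : ℕ) (i : Fin r) (x : NCPoly B r) :
    pvar B r i * x = x * pvar B r i := by
  induction x using AddMonoidAlgebra.induction_linear with
  | zero => simp
  | add f g hf hg => rw [mul_add, add_mul, hf, hg]
  | single a b =>
    show pvar B r i * AddMonoidAlgebra.single a b = AddMonoidAlgebra.single a b * pvar B r i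
    rw [pvar, AddMonoidAlgebra.single_mul_single, AddMonoidAlgebra.single_mul_single,
      one_mul, mul_one, add_comm]

lemma phi_comm (B : Type*) [Ring B] (r : ℕ) (u : PolyA r) (y : NCPoly B r) :
    phi B r u * y = y * phi B r u := by
  induction u using MvPolynomial.induction_on with
  | C a =>
    rw [show (MvPolynomial.C a : PolyA r) = algebraMap ℤ (PolyA r) a by
        rw [MvPolynomial.algebraMap_eq], AlgHom.commutes]
    exact Algebra.commutes a y
  | add p q hp hq => rw [map_add, add_mul, mul_add, hp, hq]
  | mul_X p i hp =>
    rw [map_mul, phi_X, mul_assoc, pvar_comm B r i y, ← mul_assoc, hp, mul_assoc]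

lemma phi_sig (B : Type*) [Ring B] (r : ℕ) (s : ℤ → NCPoly B r) (hs0 : s 0 = 1)
    (hsneg : ∀ j : ℤ, j < 0 → s j = 0)
    (hsrec : ∀ j : ℤ, 0 < j → s j = -∑ i : Fin r, pvar B r i * s (j - ((i : ℕ) + 1))) :
    ∀ j : ℕ, phi B r (sig r j) = s (j : ℤ) := by
  intro j
  induction j using Nat.strong_induction_on with
  | _ j ih =>
    match j with
    | 0 => simpa [sig, sig.eq_1] using hs0.symm
    | (e+1) =>
      rw [sig_succ, map_neg, map_sum, hsrec (((e+1 : ℕ) : ℤ)) (by exact_mod_cast Nat.succ_pos e)]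
      congr 1
      refine Finset.sum_congr rfl fun i _ => ?_
      by_cases h : (i : ℕ) + 1 ≤ e + 1
      · rw [if_pos h, map_mul, phi_X, ih ((e+1) - ((i : ℕ)+1)) (by omega)]
        have harg : (((e + 1 - ((i : ℕ)+1) : ℕ)) : ℤ) = ((e+1 : ℕ) : ℤ) - (((i : ℕ) : ℤ) + 1) := by
          omega
        rw [harg]
      · rw [if_neg h, map_zero, hsneg (((e+1 : ℕ) : ℤ) - (((i : ℕ) : ℤ) + 1)) (by omega),
          mul_zero]

lemma mul_step (B : Type*) [Ring B] (r : ℕ) (k : ℕ) {x y : NCPoly B r}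
    (hx : x ∈ TwoSidedIdeal.span
      (phi B r '' ((Mid r ^ k : Ideal (PolyA r)) : Set (PolyA r))))
    (hy : y ∈ Lideal B r) :
    x * y ∈ TwoSidedIdeal.span
      (phi B r '' ((Mid r ^ (k+1) : Ideal (PolyA r)) : Set (PolyA r))) := by
  set T := TwoSidedIdeal.span
    (phi B r '' ((Mid r ^ (k+1) : Ideal (PolyA r)) : Set (PolyA r))) with hT
  rw [TwoSidedIdeal.mem_span_iff_mem_addSubgroup_closure] at hx
  refine AddSubgroup.closure_induction (p := fun x _ => x * y ∈ T) ?_ ?_ ?_ ?_ hx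
  · rintro v ⟨w, ⟨a, -, g, ⟨u, hu, rfl⟩, rfl⟩, b, -, rfl⟩
    rw [Lideal, TwoSidedIdeal.mem_span_iff_mem_addSubgroup_closure] at hy
    refine AddSubgroup.closure_induction
      (p := fun y _ => a * phi B r u * b * y ∈ T) ?_ ?_ ?_ ?_ hy
    · rintro w' ⟨w2, ⟨c, -, g2, ⟨i, rfl⟩, rfl⟩, d, -, rfl⟩
      have hmem : u * MvPolynomial.X i ∈ (Mid r ^ (k+1) : Ideal (PolyA r)) := by
        rw [pow_succ]
        exact Ideal.mul_mem_mul hu (Ideal.subset_span ⟨i, rfl⟩)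
      have hg : phi B r (u * MvPolynomial.X i) ∈ T :=
        TwoSidedIdeal.subset_span ⟨u * MvPolynomial.X i, hmem, rfl⟩
      have hcalc : a * phi B r u * b * (c * pvar B r i * d)
          = (a * b * c) * phi B r (u * MvPolynomial.X i) * d := by
        calc a * phi B r u * b * (c * pvar B r i * d)
            = a * (phi B r u * (b * c)) * (pvar B r i * d) := by
              simp only [mul_assoc]
          _ = a * ((b * c) * phi B r u) * (pvar B r i * d) := by rw [phi_comm]
          _ = (a * b * c) * (phi B r u * pvar B r i) * d := by simp only [mul_assoc]
          _ = (a * b * c) * phi B r (u * MvPolynomial.X i) * d := by rw [map_mul, phi_X]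
      rw [hcalc]
      exact T.mul_mem_right _ _ (T.mul_mem_left _ _ hg)
    · show a * phi B r u * b * 0 ∈ T
      rw [mul_zero]; exact T.zero_mem
    · intro y1 y2 _ _ h1 h2
      rw [mul_add]; exact T.add_mem h1 h2
    · intro y1 _ h1
      rw [mul_neg]; exact T.neg_mem h1
  · show (0 : NCPoly B r) * y ∈ T
    rw [zero_mul]; exact T.zero_mem
  · intro x1 x2 _ _ h1 h2
    rw [add_mul]; exact T.add_mem h1 h2
  · intro x1 _ h1
    rw [neg_mul]; exact T.neg_mem h1

lemma ipow_le_span (B : Type*) [Ring B] (r : ℕ) (k : ℕ) :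
    ∀ x ∈ ipow (Lideal B r) k, x ∈ TwoSidedIdeal.span
      (phi B r '' ((Mid r ^ k : Ideal (PolyA r)) : Set (PolyA r))) := by
  induction k with
  | zero =>
    intro x _
    have h1 : (1 : NCPoly B r) ∈ TwoSidedIdeal.span
        (phi B r '' ((Mid r ^ 0 : Ideal (PolyA r)) : Set (PolyA r))) :=
      TwoSidedIdeal.subset_span ⟨1, by simp [pow_zero, Ideal.one_eq_top], map_one _⟩
    have := (TwoSidedIdeal.span
      (phi B r '' ((Mid r ^ 0 : Ideal (PolyA r)) : Set (PolyA r)))).mul_mem_left x 1 h1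
    rwa [mul_one] at this
  | succ k ih =>
    intro x hx
    rw [ipow, imul] at hx
    refine TwoSidedIdeal.mem_span_iff.mp hx _ ?_
    rintro z ⟨a, ha, b, hb, rfl⟩
    exact mul_step B r k (ih a ha) hb

/-- For each `n` there exists `k` such that `L^k ⊆ J_n`. -/
theorem statement7 (B : Type*) [Ring B] (r : ℕ)
    (s : ℤ → NCPoly B r) (hs0 : s 0 = 1) (hsneg : ∀ j : ℤ, j < 0 → s j = 0)
    (hsrec : ∀ j : ℤ, 0 < j → s j = -∑ i : Fin r, pvar B r i * s (j - ((i : ℕ) + 1)))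
    (n : ℤ) :
    ∃ k : ℕ, ipow (Lideal B r) k ≤ Jideal B r s n := by
  classical
  set n₀ : ℤ := max n 1 with hn₀
  set n' : ℕ := n₀.toNat with hn'
  have hn'1 : 1 ≤ n' := by omega
  have hn'cast : (n' : ℤ) = n₀ := by omega
  obtain ⟨k, hk⟩ := comm_main r n' hn'1
  refine ⟨k, ?_⟩
  have hφs := phi_sig B r s hs0 hsneg hsrec
  -- the image of `Iid r n'` under `phi` lies in `Jideal B r s n₀`
  have hgenJ : ∀ x ∈ Iid r n', phi B r x ∈ Jideal B r s n₀ := by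
    intro x hx
    refine Submodule.span_induction (p := fun x _ => phi B r x ∈ Jideal B r s n₀)
      ?_ ?_ ?_ ?_ hx
    · rintro y ⟨j, hj, rfl⟩
      rw [hφs j]
      exact TwoSidedIdeal.subset_span ⟨(j : ℤ), by omega, rfl⟩
    · show phi B r 0 ∈ Jideal B r s n₀
      rw [map_zero]; exact (Jideal B r s n₀).zero_mem
    · intro a b _ _ ha hb
      rw [map_add]; exact (Jideal B r s n₀).add_mem ha hb
    · intro a z _ hz
      rw [smul_eq_mul, map_mul]
      exact (Jideal B r s n₀).mul_mem_left _ _ hz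
  have hmono : Jideal B r s n₀ ≤ Jideal B r s n := by
    intro x hx
    refine TwoSidedIdeal.mem_span_iff.mp hx _ ?_
    rintro y ⟨j, hj, rfl⟩
    exact TwoSidedIdeal.subset_span ⟨j, by omega, rfl⟩
  intro x hx
  refine hmono ?_
  have hx' := ipow_le_span B r k x hx
  refine TwoSidedIdeal.mem_span_iff.mp hx' _ ?_
  rintro z ⟨u, hu, rfl⟩
  exact hgenJ u (hk hu)
end
end

section
/- Let $B$ be a ring, $r \geq 1$, and for $i \geq 1$ let $L_i \subseteq B[p_1,\dots,p_r]$ denote the two-sided ideal generated by the variables $p_j$ with $i \leq j \leq r$ (so $L_i = 0$ for $i > r$). With $s_j$ and $J_d$ defined as usual, for every $d \geq 0$ and every $1 \leq i \leq r$ one has $L_i \cdot J_d \subseteq J_{d+1} + L_{i+1}\cdot J_{d+i-r}$. -/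
open scoped Pointwise

noncomputable section

/-- The two-sided ideal `L_i` generated by the variables `p_j` with `i ≤ j ≤ r`
(variables numbered `1,…,r`; it is zero for `i > r`). -/
noncomputable def Lpartial (B : Type*) [Ring B] (r : ℕ) (i : ℕ) : TwoSidedIdeal (NCPoly B r) :=
  TwoSidedIdeal.span {x | ∃ j : Fin r, i ≤ (j : ℕ) + 1 ∧ x = pvar B r j}

/-- A span is contained in any two-sided ideal containing the generators. -/
lemma span_le_aux {R : Type*} [Ring R] {t : Set R} {K : TwoSidedIdeal R} (h : t ⊆ K) :
    TwoSidedIdeal.span t ≤ K := fun x hx => (TwoSidedIdeal.mem_span_iff.mp hx) K h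

/-- The variables are central. -/
lemma pvar_central (B : Type*) [Ring B] (r : ℕ) (m : Fin r) (x : NCPoly B r) :
    pvar B r m * x = x * pvar B r m := by
  induction x using AddMonoidAlgebra.induction with
  | zero => simp
  | single_add a b f _ _ ih =>
    rw [mul_add, add_mul, ih]
    congr 1
    show pvar B r m * AddMonoidAlgebra.single a b = AddMonoidAlgebra.single a b * pvar B r m
    unfold pvar
    rw [AddMonoidAlgebra.single_mul_single, AddMonoidAlgebra.single_mul_single,
      add_comm, one_mul, mul_one]

/-- For every `d ≥ 0` and `1 ≤ i ≤ r`, `L_i ⬝ J_d ⊆ J_{d+1} + L_{i+1} ⬝ J_{d+i-r}`. -/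
theorem statement13 (B : Type*) [Ring B] (r : ℕ) (hr : 1 ≤ r)
    (s : ℤ → NCPoly B r) (hs0 : s 0 = 1) (hsneg : ∀ j : ℤ, j < 0 → s j = 0)
    (hsrec : ∀ j : ℤ, 0 < j → s j = -∑ i : Fin r, pvar B r i * s (j - ((i : ℕ) + 1)))
    (d : ℤ) (hd : 0 ≤ d) (i : ℕ) (hi1 : 1 ≤ i) (hir : i ≤ r) :
    imul (Lpartial B r i) (Jideal B r s d) ≤
      Jideal B r s (d + 1) ⊔ imul (Lpartial B r (i + 1)) (Jideal B r s (d + i - r)) := by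
  set K : TwoSidedIdeal (NCPoly B r) :=
    Jideal B r s (d + 1) ⊔ imul (Lpartial B r (i + 1)) (Jideal B r s (d + i - r)) with hK
  -- Step 1: generators times generators land in K
  have key : ∀ m : Fin r, i ≤ (m : ℕ) + 1 → ∀ j : ℤ, d ≤ j → pvar B r m * s j ∈ K := by
    intro m hm j hj
    have hpos : (0 : ℤ) < j + ((m : ℕ) + 1) := by
      have : (0 : ℤ) ≤ (m : ℕ) := Int.ofNat_nonneg _
      omega
    have hrec := hsrec (j + ((m : ℕ) + 1)) hpos
    have hsum : ∑ k : Fin r, pvar B r k * s (j + ((m : ℕ) + 1) - ((k : ℕ) + 1))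
        = -s (j + ((m : ℕ) + 1)) := by
      rw [hrec, neg_neg]
    have hsplit := Finset.add_sum_erase Finset.univ
      (fun k : Fin r => pvar B r k * s (j + ((m : ℕ) + 1) - ((k : ℕ) + 1)))
      (Finset.mem_univ m)
    have hmterm : j + ((m : ℕ) + 1) - ((m : ℕ) + 1) = j := by ring
    have heq : pvar B r m * s j =
        -s (j + ((m : ℕ) + 1)) -
        ∑ k ∈ Finset.univ.erase m, pvar B r k * s (j + ((m : ℕ) + 1) - ((k : ℕ) + 1)) := by
      rw [← hsum, ← hsplit]; simp only [hmterm]; rw [add_sub_cancel_right]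
    rw [heq]
    apply K.sub_mem
    · -- -s (j + m + 1) ∈ J_{d+1} ≤ K
      apply K.neg_mem
      apply le_sup_left (a := Jideal B r s (d + 1)) (b := imul (Lpartial B r (i + 1)) (Jideal B r s (d + i - r)))
      exact TwoSidedIdeal.subset_span ⟨j + ((m : ℕ) + 1), by omega, rfl⟩
    · apply K.finsetSum_mem
      intro k hk
      have hkm : k ≠ m := Finset.ne_of_mem_erase hk
      rcases lt_or_gt_of_ne (fun h : (k : ℕ) = (m : ℕ) => hkm (Fin.ext h)) with hlt | hgt
      · -- k < m : term lies in J_{d+1}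
        apply le_sup_left (a := Jideal B r s (d + 1)) (b := imul (Lpartial B r (i + 1)) (Jideal B r s (d + i - r)))
        apply TwoSidedIdeal.mul_mem_left
        exact TwoSidedIdeal.subset_span ⟨j + ((m : ℕ) + 1) - ((k : ℕ) + 1), by omega, rfl⟩
      · -- k > m : term lies in L_{i+1} ⬝ J_{d+i-r}
        apply le_sup_right (a := Jideal B r s (d + 1)) (b := imul (Lpartial B r (i + 1)) (Jideal B r s (d + i - r)))
        apply TwoSidedIdeal.subset_span
        apply Set.mul_mem_mul
        · exact TwoSidedIdeal.subset_span ⟨k, by omega, rfl⟩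
        · have hkr : (k : ℕ) + 1 ≤ r := k.isLt
          exact TwoSidedIdeal.subset_span ⟨j + ((m : ℕ) + 1) - ((k : ℕ) + 1), by omega, rfl⟩
  -- Step 2: generators of L_i times arbitrary elements of J_d land in K
  have key2 : ∀ m : Fin r, i ≤ (m : ℕ) + 1 → ∀ y ∈ Jideal B r s d, pvar B r m * y ∈ K := by
    intro m hm
    set I : TwoSidedIdeal (NCPoly B r) := TwoSidedIdeal.mk'
      {y | pvar B r m * y ∈ K}
      (by simpa using K.zero_mem)
      (fun {x y} hx hy => by simpa [mul_add] using K.add_mem hx hy)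
      (fun {x} hx => by simpa [mul_neg] using K.neg_mem hx)
      (fun {x y} hy => by
        show pvar B r m * (x * y) ∈ K
        rw [← mul_assoc, pvar_central, mul_assoc]
        exact K.mul_mem_left _ _ hy)
      (fun {x y} hx => by
        show pvar B r m * (x * y) ∈ K
        rw [← mul_assoc]
        exact K.mul_mem_right _ _ hx) with hI
    intro y hy
    have : Jideal B r s d ≤ I := by
      apply span_le_aux
      rintro x ⟨j, hj, rfl⟩
      simp only [hI, SetLike.mem_coe, TwoSidedIdeal.mem_mk', Set.mem_setOf_eq]
      exact key m hm j hj
    have := this hy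
    rwa [hI, TwoSidedIdeal.mem_mk', Set.mem_setOf_eq] at this
  -- Step 3: arbitrary elements of L_i times arbitrary elements of J_d land in K
  have key3 : ∀ x ∈ Lpartial B r i, ∀ y ∈ Jideal B r s d, x * y ∈ K := by
    set I : TwoSidedIdeal (NCPoly B r) := TwoSidedIdeal.mk'
      {x | ∀ y ∈ Jideal B r s d, x * y ∈ K}
      (fun y _ => by simpa using K.zero_mem)
      (fun {a b} ha hb y hy => by simpa [add_mul] using K.add_mem (ha y hy) (hb y hy))
      (fun {a} ha y hy => by simpa [neg_mul] using K.neg_mem (ha y hy))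
      (fun {a b} hb y hy => by
        show a * b * y ∈ K
        rw [mul_assoc]
        exact K.mul_mem_left _ _ (hb y hy))
      (fun {a b} ha y hy => by
        show a * b * y ∈ K
        rw [mul_assoc]
        exact ha _ ((Jideal B r s d).mul_mem_left _ _ hy)) with hI
    intro x hx
    have : Lpartial B r i ≤ I := by
      apply span_le_aux
      rintro z ⟨m, hm, rfl⟩
      simp only [hI, SetLike.mem_coe, TwoSidedIdeal.mem_mk', Set.mem_setOf_eq]
      exact key2 m hm
    have := this hx
    rwa [hI, TwoSidedIdeal.mem_mk', Set.mem_setOf_eq] at this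
  -- conclude
  apply span_le_aux
  rintro z hz
  rw [Set.mem_mul] at hz
  obtain ⟨a, ha, b, hb, rfl⟩ := hz
  exact key3 a ha b hb
end
end
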